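/- Let V be an oriented identification function for Γ: P → R ⊆ ℝ that is locally non-constant with parameter N, i.e., N·|γ − Γ(P)| ≤ |E_{Y∼P}[V(Y,γ)]| for all P ∈ P and γ ∈ R. Then the induced loss ℓ(y,γ) = ∫_{γ₀}^γ V(y,r) dr + κ(y) satisfies (N/2)·(γ − Γ(P))² ≤ |E_{Y∼P}[ℓ(Y,γ)] − E_{Y∼P}[ℓ(Y,Γ(P))]| for all P ∈ P and γ ∈ R. -/

import Mathlib

open MeasureTheory ProbabilityTheory

/-- If the oriented identification function V is locally non-constant with
parameter N, the induced loss is locally anti Hölder-smooth with parameters (N/2, 2). -/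
theorem induced_loss_anti_hoelder_smooth
    {Y : Type*} [MeasurableSpace Y]
    (Pcal : Set (Measure Y)) (hprob : ∀ P ∈ Pcal, IsProbabilityMeasure P)
    (R : Set ℝ) (hR : R.OrdConnected)
    (Γ : Measure Y → ℝ) (hΓR : ∀ P ∈ Pcal, Γ P ∈ R)
    (V : Y → ℝ → ℝ) (C : ℝ) (hbdd : ∀ y r, |V y r| ≤ C)
    (hmeas : Measurable (Function.uncurry V))
    (horiented : ∀ P ∈ Pcal, ∀ γ ∈ R, (0 < ∫ y, V y γ ∂P ↔ Γ P < γ))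
    (N : ℝ)
    (hnc : ∀ P ∈ Pcal, ∀ γ ∈ R, N * |γ - Γ P| ≤ |∫ y, V y γ ∂P|)
    (γ₀ : ℝ) (hγ₀ : ∃ P ∈ Pcal, Γ P = γ₀)
    (κ : Y → ℝ) (hκ : ∀ P ∈ Pcal, Integrable κ P) :
    ∀ P ∈ Pcal, ∀ γ ∈ R,
      N / 2 * (γ - Γ P) ^ 2 ≤
        |(∫ y, ((∫ r in γ₀..γ, V y r) + κ y) ∂P) -
          ∫ y, ((∫ r in γ₀..(Γ P), V y r) + κ y) ∂P| := by
  intro P hP γ hγ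
  haveI := hprob P hP
  set m := Γ P with hmdef
  have hmR : m ∈ R := hΓR P hP
  -- measurability of slices
  have hVy : ∀ y, Measurable (V y) := fun y =>
    hmeas.comp (measurable_prodMk_left)
  have hVr : ∀ r, Measurable (fun y => V y r) := fun r =>
    hmeas.comp (measurable_id.prodMk measurable_const)
  -- interval integrability of V y
  have hVint : ∀ (y : Y) (a b : ℝ), IntervalIntegrable (V y) volume a b := by
    intro y a b
    rw [intervalIntegrable_iff]
    exact Measure.integrableOn_of_bounded measure_Ioc_lt_top.ne
      (hVy y).aestronglyMeasurable
      (ae_of_all _ fun r => by simpa [Real.norm_eq_abs] using hbdd y r)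
  -- integrability of the induced losses
  have hLint : ∀ a b : ℝ, Integrable (fun y => ∫ r in a..b, V y r) P := by
    intro a b
    refine (integrable_const (C * |b - a|)).mono' ?_ (ae_of_all _ fun y => ?_)
    · have h2 : StronglyMeasurable (Function.uncurry fun y r => V y r) :=
        hmeas.stronglyMeasurable
      have hm1 : Measurable fun y => ∫ r in Set.Ioc a b, V y r :=
        (h2.integral_prod_right (ν := volume.restrict (Set.Ioc a b))).measurable
      have hm2 : Measurable fun y => ∫ r in Set.Ioc b a, V y r :=
        (h2.integral_prod_right (ν := volume.restrict (Set.Ioc b a))).measurable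
      have heq : (fun y => ∫ r in a..b, V y r)
          = fun y => (∫ r in Set.Ioc a b, V y r) - ∫ r in Set.Ioc b a, V y r := by
        funext y; rfl
      rw [heq]
      exact (hm1.sub hm2).aestronglyMeasurable
    · exact intervalIntegral.norm_integral_le_of_norm_le_const fun r _ => by
        simpa [Real.norm_eq_abs] using hbdd y r
  -- the difference of expected losses
  have hdiff :
      ((∫ y, ((∫ r in γ₀..γ, V y r) + κ y) ∂P) -
        ∫ y, ((∫ r in γ₀..m, V y r) + κ y) ∂P)
      = ∫ y, (∫ r in m..γ, V y r) ∂P := by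
    rw [integral_add (hLint γ₀ γ) (hκ P hP), integral_add (hLint γ₀ m) (hκ P hP)]
    have h3 : (∫ y, (∫ r in γ₀..γ, V y r) ∂P) - ∫ y, (∫ r in γ₀..m, V y r) ∂P
        = ∫ y, ((∫ r in γ₀..γ, V y r) - ∫ r in γ₀..m, V y r) ∂P :=
      (integral_sub (hLint γ₀ γ) (hLint γ₀ m)).symm
    rw [show ((∫ y, ((∫ r in γ₀..γ, V y r)) ∂P) + (∫ y, κ y ∂P)) -
        ((∫ y, ((∫ r in γ₀..m, V y r)) ∂P) + (∫ y, κ y ∂P))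
        = (∫ y, (∫ r in γ₀..γ, V y r) ∂P) - ∫ y, (∫ r in γ₀..m, V y r) ∂P by ring, h3]
    congr 1; funext y
    exact intervalIntegral.integral_interval_sub_left (hVint y γ₀ γ) (hVint y γ₀ m)
  rw [hdiff]
  -- trivial case N ≤ 0
  rcases le_or_gt N 0 with hN | hN
  · have h1 : N / 2 * (γ - m) ^ 2 ≤ 0 := by nlinarith [sq_nonneg (γ - m)]
    exact h1.trans (abs_nonneg _)
  -- Fubini
  have swap : ∀ a b : ℝ,
      (∫ y, (∫ r in Set.Ioc a b, V y r) ∂P) = ∫ r in Set.Ioc a b, (∫ y, V y r ∂P) := by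
    intro a b
    haveI : IsFiniteMeasure (volume.restrict (Set.Ioc a b)) :=
      ⟨by rw [Measure.restrict_apply_univ]; exact measure_Ioc_lt_top⟩
    refine integral_integral_swap (f := fun y r => V y r) ?_
    refine (integrable_const C).mono' hmeas.aestronglyMeasurable (ae_of_all _ fun p => ?_)
    simpa [Real.norm_eq_abs, Function.uncurry] using hbdd p.1 p.2
  -- F r := ∫ V y r ∂P : measurable, bounded, hence integrable on intervals
  have hFmeas : Measurable fun r => ∫ y, V y r ∂P := by
    have h : Measurable (Function.uncurry fun (r : ℝ) (y : Y) => V y r) :=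
      hmeas.comp measurable_swap
    exact (h.stronglyMeasurable.integral_prod_right (ν := P)).measurable
  have hFbdd : ∀ r, |∫ y, V y r ∂P| ≤ C := by
    intro r
    have h := norm_integral_le_of_norm_le_const (μ := P) (f := fun y => V y r) (C := C)
      (ae_of_all _ fun y => by simpa [Real.norm_eq_abs] using hbdd y r)
    simpa [Real.norm_eq_abs, measure_univ] using h
  have hFint : ∀ a b : ℝ, IntegrableOn (fun r => ∫ y, V y r ∂P) (Set.Ioc a b) volume := by
    intro a b
    exact Measure.integrableOn_of_bounded measure_Ioc_lt_top.ne
      hFmeas.aestronglyMeasurable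
      (ae_of_all _ fun r => by simpa [Real.norm_eq_abs] using hFbdd r)
  -- lower-bound integrand integrability
  have hgint : ∀ a b : ℝ, IntegrableOn (fun r => N * (r - m)) (Set.Ioc a b) volume :=
    fun a b => (continuous_const.mul (continuous_id.sub continuous_const)).integrableOn_Ioc
  -- compute ∫ r in a..b, N * (r - m)
  have hcomp : ∀ a b : ℝ, (∫ r in a..b, N * (r - m)) =
      N * ((b ^ 2 - a ^ 2) / 2 - (b - a) * m) := by
    intro a b
    rw [intervalIntegral.integral_const_mul]
    rw [intervalIntegral.integral_sub intervalIntegral.intervalIntegrable_id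
      (intervalIntegrable_const (c := m)), integral_id]
    simp [smul_eq_mul]
  rcases le_total m γ with hle | hle
  · -- case m ≤ γ
    have key : N / 2 * (γ - m) ^ 2 ≤ ∫ y, (∫ r in m..γ, V y r) ∂P := by
      have e1 : (∫ y, (∫ r in m..γ, V y r) ∂P)
          = ∫ r in Set.Ioc m γ, (∫ y, V y r ∂P) := by
        rw [show (fun y => ∫ r in m..γ, V y r)
            = fun y => ∫ r in Set.Ioc m γ, V y r from
          funext fun y => intervalIntegral.integral_of_le hle]
        exact swap m γ
      rw [e1]
      have hmono : (∫ r in Set.Ioc m γ, N * (r - m))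
          ≤ ∫ r in Set.Ioc m γ, (∫ y, V y r ∂P) := by
        refine setIntegral_mono_on (hgint m γ) (hFint m γ) measurableSet_Ioc ?_
        intro r hr
        have hrR : r ∈ R := hR.out hmR hγ ⟨hr.1.le, hr.2⟩
        have hpos : 0 < ∫ y, V y r ∂P := (horiented P hP r hrR).2 hr.1
        have h := hnc P hP r hrR
        rw [abs_of_pos hpos, abs_of_nonneg (by linarith [hr.1.le] : (0:ℝ) ≤ r - m)] at h
        exact h
      have hval : (∫ r in Set.Ioc m γ, N * (r - m)) = N / 2 * (γ - m) ^ 2 := by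
        rw [← intervalIntegral.integral_of_le hle, hcomp]
        ring
      linarith
    calc N / 2 * (γ - m) ^ 2 ≤ ∫ y, (∫ r in m..γ, V y r) ∂P := key
      _ ≤ |∫ y, (∫ r in m..γ, V y r) ∂P| := le_abs_self _
  · -- case γ ≤ m
    have key : N / 2 * (γ - m) ^ 2 ≤ ∫ y, (∫ r in m..γ, V y r) ∂P := by
      have e1 : (∫ y, (∫ r in m..γ, V y r) ∂P)
          = -∫ r in Set.Ioc γ m, (∫ y, V y r ∂P) := by
        rw [show (fun y => ∫ r in m..γ, V y r)
            = fun y => -∫ r in Set.Ioc γ m, V y r from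
          funext fun y => by
            rw [intervalIntegral.integral_symm, intervalIntegral.integral_of_le hle]]
        rw [integral_neg]
        exact congrArg Neg.neg (swap γ m)
      rw [e1]
      have hmono : (∫ r in Set.Ioc γ m, (∫ y, V y r ∂P))
          ≤ ∫ r in Set.Ioc γ m, N * (r - m) := by
        refine setIntegral_mono_on (hFint γ m) (hgint γ m) measurableSet_Ioc ?_
        intro r hr
        have hrR : r ∈ R := hR.out hγ hmR ⟨hr.1.le, hr.2⟩
        have hnpos : ¬ (0 < ∫ y, V y r ∂P) := fun h =>
          absurd ((horiented P hP r hrR).1 h) (not_lt.2 hr.2)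
        have hle0 : (∫ y, V y r ∂P) ≤ 0 := not_lt.1 hnpos
        have h := hnc P hP r hrR
        rw [abs_of_nonpos hle0, abs_of_nonpos (by linarith [hr.2] : r - m ≤ 0)] at h
        linarith
      have hval : (∫ r in Set.Ioc γ m, N * (r - m)) = -(N / 2 * (γ - m) ^ 2) := by
        rw [← intervalIntegral.integral_of_le hle, hcomp]
        ring
      linarith
    calc N / 2 * (γ - m) ^ 2 ≤ ∫ y, (∫ r in m..γ, V y r) ∂P := key
      _ ≤ |∫ y, (∫ r in m..γ, V y r) ∂P| := le_abs_self _
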